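/- arXiv:2312.04033 — 2 statements merged into one kernel-verified Lean document; each statement's English description precedes it below -/
import Mathlib

section
/- If R1, R2 : ℝ → ℂ are differentiable, satisfy R1' = i(E + eφ)R1 - i m R2 and R2' = -i(E + eφ)R2 + i m R1 for real-valued functions φ and real constants E, e, m, and both |R1|² and |R2|² are integrable over ℝ, then |R1(s)| = |R2(s)| for all s ∈ ℝ. -/
open MeasureTheory

theorem dirac_radial_equal_moduli
    (R1 R2 : ℝ → ℂ) (φ : ℝ → ℝ) (E e m : ℝ)
    (h1 : ∀ s : ℝ, HasDerivAt R1
      (Complex.I * ((E : ℂ) + (e : ℂ) * (φ s : ℂ)) * R1 s - Complex.I * (m : ℂ) * R2 s) s)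
    (h2 : ∀ s : ℝ, HasDerivAt R2
      (-(Complex.I * ((E : ℂ) + (e : ℂ) * (φ s : ℂ))) * R2 s + Complex.I * (m : ℂ) * R1 s) s)
    (hi1 : Integrable (fun s : ℝ => ‖R1 s‖ ^ 2))
    (hi2 : Integrable (fun s : ℝ => ‖R2 s‖ ^ 2)) :
    ∀ s : ℝ, ‖R1 s‖ = ‖R2 s‖ := by
  set f : ℝ → ℝ := fun s => ‖R1 s‖ ^ 2 - ‖R2 s‖ ^ 2 with hfdef
  have hf : f = fun s => ((R1 s).re ^ 2 + (R1 s).im ^ 2) - ((R2 s).re ^ 2 + (R2 s).im ^ 2) := by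
    funext t
    simp only [hfdef, Complex.sq_norm, Complex.normSq_apply]
    ring
  have key : ∀ s, HasDerivAt f 0 s := by
    intro s
    have hr1 : HasDerivAt (fun t => (R1 t).re)
        (Complex.I * ((E : ℂ) + (e : ℂ) * (φ s : ℂ)) * R1 s - Complex.I * (m : ℂ) * R2 s).re s :=
      (Complex.reCLM.hasFDerivAt.comp_hasDerivAt s (h1 s))
    have hi1' : HasDerivAt (fun t => (R1 t).im)
        (Complex.I * ((E : ℂ) + (e : ℂ) * (φ s : ℂ)) * R1 s - Complex.I * (m : ℂ) * R2 s).im s :=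
      (Complex.imCLM.hasFDerivAt.comp_hasDerivAt s (h1 s))
    have hr2 : HasDerivAt (fun t => (R2 t).re)
        (-(Complex.I * ((E : ℂ) + (e : ℂ) * (φ s : ℂ))) * R2 s + Complex.I * (m : ℂ) * R1 s).re s :=
      (Complex.reCLM.hasFDerivAt.comp_hasDerivAt s (h2 s))
    have hi2' : HasDerivAt (fun t => (R2 t).im)
        (-(Complex.I * ((E : ℂ) + (e : ℂ) * (φ s : ℂ))) * R2 s + Complex.I * (m : ℂ) * R1 s).im s :=
      (Complex.imCLM.hasFDerivAt.comp_hasDerivAt s (h2 s))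
    rw [hf]
    have h := ((hr1.mul hr1).add (hi1'.mul hi1')).sub ((hr2.mul hr2).add (hi2'.mul hi2'))
    have heq : ∀ t, (R1 t).re ^ 2 + (R1 t).im ^ 2 - ((R2 t).re ^ 2 + (R2 t).im ^ 2)
        = (R1 t).re * (R1 t).re + (R1 t).im * (R1 t).im
          - ((R2 t).re * (R2 t).re + (R2 t).im * (R2 t).im) := by intro t; ring
    simp only [heq]
    convert h using 1
    · rfl
    · rfl
    · rfl
    simp [Complex.sub_re, Complex.sub_im, Complex.add_re, Complex.add_im, Complex.mul_re,
      Complex.mul_im, Complex.I_re, Complex.I_im, Complex.ofReal_re, Complex.ofReal_im,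
      Complex.neg_re, Complex.neg_im]
    ring
  have hconst : ∀ s : ℝ, f s = f 0 := by
    intro s
    exact is_const_of_deriv_eq_zero (fun x => (key x).differentiableAt)
      (fun x => (key x).deriv) s 0
  have hintf : Integrable f := hi1.sub hi2
  have hintc : Integrable (fun _ : ℝ => f 0) := by
    have : (fun _ : ℝ => f 0) = f := by funext t; exact (hconst t).symm
    rwa [this]
  have hc0 : f 0 = 0 := by
    rcases (integrable_const_iff).mp hintc with h | h
    · exact h
    · exact absurd (measure_lt_top (volume : Measure ℝ) Set.univ) (by simp)
  intro s
  have : ‖R1 s‖ ^ 2 = ‖R2 s‖ ^ 2 := by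
    have := hconst s; rw [hc0] at this
    simpa [hfdef, sub_eq_zero] using this
  have h1n := norm_nonneg (R1 s)
  have h2n := norm_nonneg (R2 s)
  nlinarith [this, h1n, h2n]
end

section
/- Suppose u, v : ℝ → ℝ are differentiable, v satisfies v(s) → v₀ ≠ 0 as s → -∞, and u' (s) = (2 + (γ/2)e^{s})v(s) for s < 0 with γ > 0. Then u(s)/(2 v₀ s) → 1 as s → -∞; in particular |u(s)| → ∞ and v(s)/u(s) → 0 as s → -∞. -/
open Filter

theorem slope_tendsto_aux
    (u v : ℝ → ℝ) (γ v₀ : ℝ) (hγ : 0 < γ) (hv₀ : v₀ ≠ 0)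
    (hlim : Tendsto v atBot (nhds v₀))
    (hode : ∀ s < (0 : ℝ), HasDerivAt u ((2 + γ / 2 * Real.exp s) * v s) s) :
    Tendsto (fun s => u s / s) atBot (nhds (2 * v₀)) := by
  have hd : Tendsto (fun s => (2 + γ / 2 * Real.exp s) * v s) atBot (nhds (2 * v₀)) := by
    have he : Tendsto (fun s : ℝ => (2 : ℝ) + γ / 2 * Real.exp s) atBot (nhds 2) := by
      have := (Real.tendsto_exp_atBot.const_mul (γ / 2)).const_add (2 : ℝ)
      simpa using this
    simpa using he.mul hlim
  rw [Metric.tendsto_nhds]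
  intro ε hε
  have h3 : (0:ℝ) < ε / 3 := by linarith
  obtain ⟨S', hS'⟩ := eventually_atBot.mp (Metric.tendsto_nhds.mp hd (ε / 3) h3)
  set S : ℝ := min S' (-1) with hS
  have hSneg : S < 0 := lt_of_le_of_lt (min_le_right _ _) (by norm_num)
  have hSd : ∀ x ≤ S, |(2 + γ / 2 * Real.exp x) * v x - 2 * v₀| < ε / 3 := by
    intro x hx
    have := hS' x (hx.trans (min_le_left _ _))
    simpa [Real.dist_eq] using this
  set C : ℝ := |u S - 2 * v₀ * S| with hC
  -- MVT bound on [s, S]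
  have key : ∀ s ≤ S, |u s - 2 * v₀ * s| ≤ ε / 3 * (S - s) + C := by
    intro s hs
    have hconv : Convex ℝ (Set.Icc s S) := convex_Icc _ _
    have hderiv : ∀ x ∈ Set.Icc s S,
        HasDerivWithinAt (fun y => u y - 2 * v₀ * y)
          ((2 + γ / 2 * Real.exp x) * v x - 2 * v₀) (Set.Icc s S) x := by
      intro x hx
      have hx0 : x < 0 := lt_of_le_of_lt hx.2 hSneg
      have h : HasDerivWithinAt (fun y => u y - 2 * v₀ * y)
          ((2 + γ / 2 * Real.exp x) * v x - 2 * v₀ * 1) (Set.Icc s S) x := ((hode x hx0).sub ((hasDerivAt_id x).const_mul (2 * v₀))).hasDerivWithinAt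
        (s := Set.Icc s S)
      simpa using h
    have hbound : ∀ x ∈ Set.Icc s S,
        ‖(2 + γ / 2 * Real.exp x) * v x - 2 * v₀‖ ≤ ε / 3 := by
      intro x hx
      exact le_of_lt (by simpa [Real.norm_eq_abs] using hSd x hx.2)
    have := hconv.norm_image_sub_le_of_norm_hasDerivWithin_le hderiv hbound
      (Set.right_mem_Icc.mpr hs) (Set.left_mem_Icc.mpr hs)
    have h1 : |(u s - 2 * v₀ * s) - (u S - 2 * v₀ * S)| ≤ ε / 3 * (S - s) := by
      have habs : ‖s - S‖ = S - s := by
        rw [Real.norm_eq_abs, abs_sub_comm, abs_of_nonneg (by linarith)]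
      simpa [Real.norm_eq_abs, habs] using this
    calc |u s - 2 * v₀ * s|
        ≤ |(u s - 2 * v₀ * s) - (u S - 2 * v₀ * S)| + |u S - 2 * v₀ * S| := by
          have := abs_sub_abs_le_abs_sub (u s - 2 * v₀ * s) (u S - 2 * v₀ * S)
          have := abs_add_le ((u s - 2 * v₀ * s) - (u S - 2 * v₀ * S)) (u S - 2 * v₀ * S)
          calc |u s - 2 * v₀ * s| = |((u s - 2 * v₀ * s) - (u S - 2 * v₀ * S)) + (u S - 2 * v₀ * S)| := by ring_nf
            _ ≤ _ := abs_add_le _ _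
      _ ≤ ε / 3 * (S - s) + C := by rw [hC]; linarith
  -- conclude
  have hCnn : 0 ≤ C := abs_nonneg _
  filter_upwards [eventually_le_atBot S, eventually_le_atBot (-(3 * C / ε) - 1)] with s hs1 hs2
  have hsneg : s < 0 := lt_of_le_of_lt hs1 hSneg
  have hkey := key s hs1
  rw [Real.dist_eq]
  have hns : |s| = -s := abs_of_neg hsneg
  have heq : |u s / s - 2 * v₀| = |u s - 2 * v₀ * s| / (-s) := by
    have hs0 : s ≠ 0 := hsneg.ne
    rw [← hns, ← abs_div]
    congr 1
    field_simp
  rw [heq]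
  rw [div_lt_iff₀ (by linarith : (0:ℝ) < -s)]
  have h1 : ε / 3 * (S - s) ≤ ε / 3 * (-s) := by
    have : S - s ≤ -s := by linarith [hSneg]
    nlinarith
  have h2 : C < ε / 3 * (-s) := by
    have hle : 3 * C / ε ≤ -s - 1 := by linarith
    have h' : 3 * C ≤ (-s - 1) * ε := (div_le_iff₀ hε).mp hle
    nlinarith
  calc |u s - 2 * v₀ * s| ≤ ε / 3 * (S - s) + C := hkey
    _ < ε / 3 * (-s) + ε / 3 * (-s) := by linarith
    _ ≤ ε * (-s) := by nlinarith [neg_pos.mpr hsneg]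

theorem linear_growth_at_minus_infinity
    (u v : ℝ → ℝ) (γ v₀ : ℝ) (hγ : 0 < γ) (hv₀ : v₀ ≠ 0)
    (hu : Differentiable ℝ u) (hv : Differentiable ℝ v)
    (hlim : Tendsto v atBot (nhds v₀))
    (hode : ∀ s < (0 : ℝ), HasDerivAt u ((2 + γ / 2 * Real.exp s) * v s) s) :
    Tendsto (fun s => u s / (2 * v₀ * s)) atBot (nhds 1) ∧
    Tendsto (fun s => |u s|) atBot atTop ∧
    Tendsto (fun s => v s / u s) atBot (nhds 0) := by
  have hslope := slope_tendsto_aux u v γ v₀ hγ hv₀ hlim hode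
  have h2v₀ : (2 : ℝ) * v₀ ≠ 0 := by simp [hv₀]
  have goal1 : Tendsto (fun s => u s / (2 * v₀ * s)) atBot (nhds 1) := by
    have := hslope.div_const (2 * v₀)
    rw [div_self h2v₀] at this
    refine this.congr' ?_
    filter_upwards [eventually_ne_atBot (0:ℝ)] with s hs
    rw [div_div, mul_comm s (2 * v₀)]
  have goal2 : Tendsto (fun s => |u s|) atBot atTop := by
    have habs : Tendsto (fun s => |u s / s|) atBot (nhds |2 * v₀|) :=
      hslope.abs
    have hpos : (0:ℝ) < |2 * v₀| := abs_pos.mpr h2v₀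
    have := habs.pos_mul_atTop hpos tendsto_abs_atBot_atTop
    refine this.congr' ?_
    filter_upwards [eventually_ne_atBot (0:ℝ)] with s hs
    rw [← abs_mul, div_mul_cancel₀ _ hs]
  have goal3 : Tendsto (fun s => v s / u s) atBot (nhds 0) := by
    have hinv : Tendsto (fun s => (u s)⁻¹) atBot (nhds 0) := by
      rw [tendsto_zero_iff_abs_tendsto_zero]
      have := goal2.inv_tendsto_atTop
      refine this.congr ?_
      intro s
      simp [abs_inv]
    have := hlim.mul hinv
    rw [mul_zero] at this
    exact this.congr (fun s => (div_eq_mul_inv _ _).symm)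
  exact ⟨goal1, goal2, goal3⟩
end
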